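/- arXiv:2405.19368 — 2 statements merged into one kernel-verified Lean document; each statement's English description precedes it below -/
import Mathlib

section
/- If 0 < x ≤ 1 and 0 < y ≤ 1, then Γ(x,y) ≤ min(Γ(x)/y^x, Γ(y)/x^y). -/
open Real Set intervalIntegral
open MeasureTheory

noncomputable def biGamma (x y : ℝ) : ℝ :=
  ∫ t in (0:ℝ)..1, (-Real.log t) ^ (x - 1) * (-Real.log (1 - t)) ^ (y - 1)

lemma image_exp_neg : (fun u : ℝ => Real.exp (-u)) '' Ioi 0 = Ioo 0 1 := by
  ext t
  constructor
  · rintro ⟨u, hu, rfl⟩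
    simp only [mem_Ioi] at hu
    exact ⟨exp_pos _, Real.exp_lt_one_iff.2 (by linarith)⟩
  · rintro ⟨h0, h1⟩
    exact ⟨-Real.log t, by simpa using Real.log_neg h0 h1, by simp [Real.exp_log h0]⟩

lemma hderiv_exp_neg : ∀ u ∈ Ioi (0:ℝ), HasDerivWithinAt (fun u : ℝ => Real.exp (-u))
    (-Real.exp (-u)) (Ioi 0) u := by
  intro u _
  have h := ((Real.hasDerivAt_exp (-u)).comp u (hasDerivAt_neg u))
  simpa [mul_comm, Function.comp_def] using h.hasDerivWithinAt

lemma inj_exp_neg : InjOn (fun u : ℝ => Real.exp (-u)) (Ioi 0) := by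
  intro a _ b _ h
  have := Real.exp_injective h
  linarith

lemma transform (x y : ℝ) : ∀ u ∈ Ioi (0:ℝ),
    |(-Real.exp (-u))| • ((-Real.log (Real.exp (-u))) ^ (x-1) * (Real.exp (-u)) ^ (y-1))
      = u ^ (x-1) * Real.exp (-(y * u)) := by
  intro u _
  rw [abs_neg, abs_of_pos (exp_pos _), Real.log_exp, neg_neg, smul_eq_mul,
    ← Real.exp_mul, ← mul_assoc, mul_comm (Real.exp (-u)), mul_assoc, ← Real.exp_add]
  ring_nf

lemma integral_g (x y : ℝ) (hx : 0 < x) (hy : 0 < y) :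
    ∫ t in Ioo (0:ℝ) 1, (-Real.log t) ^ (x-1) * t ^ (y-1) = Real.Gamma x / y ^ x := by
  rw [← image_exp_neg, integral_image_eq_integral_abs_deriv_smul measurableSet_Ioi
    hderiv_exp_neg inj_exp_neg,
    setIntegral_congr_fun measurableSet_Ioi (transform x y),
    Real.integral_rpow_mul_exp_neg_mul_Ioi hx hy, Real.div_rpow zero_le_one hy.le,
    Real.one_rpow]
  ring

lemma integrable_g (x y : ℝ) (hx : 0 < x) (hy : 0 < y) :
    IntegrableOn (fun t : ℝ => (-Real.log t) ^ (x-1) * t ^ (y-1)) (Ioo 0 1) := by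
  rw [← image_exp_neg, integrableOn_image_iff_integrableOn_abs_deriv_smul measurableSet_Ioi
    hderiv_exp_neg inj_exp_neg]
  have h := integrableOn_rpow_mul_exp_neg_mul_rpow (s := x - 1) (p := 1) (b := y)
    (by linarith) zero_lt_one hy
  exact h.congr_fun (fun u hu => by beta_reduce; rw [Real.rpow_one, neg_mul, ← transform x y u hu])
    measurableSet_Ioi

lemma biGamma_le (x y : ℝ) (hx0 : 0 < x) (hx1 : x ≤ 1) (hy0 : 0 < y) (hy1 : y ≤ 1) :
    biGamma x y ≤ Real.Gamma x / y ^ x := by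
  rw [biGamma, intervalIntegral.integral_of_le zero_le_one,
    MeasureTheory.integral_Ioc_eq_integral_Ioo, ← integral_g x y hx0 hy0]
  refine MeasureTheory.integral_mono_of_nonneg ?_ (integrable_g x y hx0 hy0) ?_
  · filter_upwards [MeasureTheory.ae_restrict_mem measurableSet_Ioo] with t ht
    exact mul_nonneg (Real.rpow_nonneg (by simpa using Real.log_nonpos ht.1.le ht.2.le) _)
      (Real.rpow_nonneg (by simpa using Real.log_nonpos (by linarith [ht.2]) (by linarith [ht.1])) _)
  · filter_upwards [MeasureTheory.ae_restrict_mem measurableSet_Ioo] with t ht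
    have h1 : t ≤ -Real.log (1 - t) := by
      have := Real.log_le_sub_one_of_pos (x := 1 - t) (by linarith [ht.2])
      linarith
    refine mul_le_mul_of_nonneg_left ?_
      (Real.rpow_nonneg (by simpa using Real.log_nonpos ht.1.le ht.2.le) _)
    exact Real.rpow_le_rpow_of_nonpos ht.1 h1 (by linarith)

lemma biGamma_symm (x y : ℝ) : biGamma x y = biGamma y x := by
  have h := intervalIntegral.integral_comp_sub_left (a := (0:ℝ)) (b := 1)
    (fun t => (-Real.log t) ^ (y-1) * (-Real.log (1-t)) ^ (x-1)) 1
  norm_num at h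
  rw [biGamma, biGamma, ← h]
  refine intervalIntegral.integral_congr fun t _ => ?_
  simp [mul_comm]

theorem biGamma_le_min (x y : ℝ) (hx0 : 0 < x) (hx1 : x ≤ 1) (hy0 : 0 < y) (hy1 : y ≤ 1) :
    biGamma x y ≤ min (Real.Gamma x / y ^ x) (Real.Gamma y / x ^ y) := by
  refine le_min (biGamma_le x y hx0 hx1 hy0 hy1) ?_
  rw [biGamma_symm]
  exact biGamma_le y x hy0 hy1 hx0 hx1
end

section
/- If x ≥ 1 then Γ(x,x) ≥ Γ(x)/x^x, and the inequality is reversed if 0 < x ≤ 1. -/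
open Real Set intervalIntegral

open MeasureTheory

private theorem exp_neg_deriv : ∀ u ∈ Ioi (0:ℝ),
    HasDerivWithinAt (fun u : ℝ => rexp (-u)) (-rexp (-u)) (Ioi 0) u := by
  intro u _
  simpa [Function.comp_def] using (((Real.hasDerivAt_exp (-u)).comp u (hasDerivAt_neg u))).hasDerivWithinAt

private theorem exp_neg_inj : (Ioi (0:ℝ)).InjOn (fun u : ℝ => rexp (-u)) :=
  fun a _ b _ h => by
    have := Real.exp_injective h; linarith [neg_injective this]

private theorem exp_neg_image : (fun u : ℝ => rexp (-u)) '' (Ioi 0) = Ioo 0 1 := by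
  ext y
  constructor
  · rintro ⟨u, hu, rfl⟩
    exact ⟨Real.exp_pos _, Real.exp_lt_one_iff.2 (by simpa using hu)⟩
  · rintro ⟨h0, h1⟩
    exact ⟨-Real.log y, by simpa using Real.log_neg h0 h1, by simp [Real.exp_log h0]⟩

private theorem subst_exp (g : ℝ → ℝ) :
    ∫ t in Ioo (0:ℝ) 1, g t = ∫ u in Ioi (0:ℝ), rexp (-u) * g (rexp (-u)) := by
  rw [← exp_neg_image, integral_image_eq_integral_abs_deriv_smul measurableSet_Ioi
    exp_neg_deriv exp_neg_inj]
  simp [abs_of_pos (Real.exp_pos _)]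

private theorem subst_exp_integrable (g : ℝ → ℝ) :
    IntegrableOn g (Ioo (0:ℝ) 1) ↔
      IntegrableOn (fun u => rexp (-u) * g (rexp (-u))) (Ioi (0:ℝ)) := by
  rw [← exp_neg_image, integrableOn_image_iff_integrableOn_abs_deriv_smul measurableSet_Ioi
    exp_neg_deriv exp_neg_inj]
  simp only [abs_neg, abs_of_pos (Real.exp_pos _), smul_eq_mul]

private theorem key_eq {x : ℝ} (u : ℝ) :
    rexp (-u) * ((-Real.log (rexp (-u))) ^ (x-1) * (rexp (-u)) ^ (x-1))
      = u ^ (x-1) * rexp (-(x*u)) := by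
  rw [Real.log_exp, neg_neg, Real.rpow_def_of_pos (Real.exp_pos _), Real.log_exp,
    show rexp (-u) * (u ^ (x - 1) * rexp (-u * (x - 1))) =
      u ^ (x-1) * (rexp (-u) * rexp (-u * (x-1))) by ring, ← Real.exp_add]
  ring_nf

private theorem comp_integral {x : ℝ} (hx : 0 < x) :
    ∫ t in Ioo (0:ℝ) 1, (-Real.log t) ^ (x-1) * t ^ (x-1) = Real.Gamma x / x ^ x := by
  have h1 : ∫ u in Ioi (0:ℝ), rexp (-u) * ((-Real.log (rexp (-u))) ^ (x-1) * (rexp (-u)) ^ (x-1))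
      = ∫ u in Ioi (0:ℝ), u ^ (x-1) * rexp (-(x*u)) :=
    setIntegral_congr_fun measurableSet_Ioi (fun u _ => key_eq u)
  have h2 := Real.integral_rpow_mul_exp_neg_mul_Ioi hx hx
  have h3 : ((1:ℝ)/x) ^ x = (x ^ x)⁻¹ := by
    rw [one_div, Real.inv_rpow hx.le]
  rw [subst_exp, h1, h2, h3, inv_mul_eq_div]

private theorem comp_integrable {x : ℝ} (hx : 0 < x) :
    IntegrableOn (fun t => (-Real.log t) ^ (x-1) * t ^ (x-1)) (Ioo (0:ℝ) 1) := by
  have h := integrableOn_rpow_mul_exp_neg_mul_rpow (p := 1) (s := x - 1) (b := x)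
    (by linarith) one_pos hx
  rw [subst_exp_integrable]
  refine h.congr_fun (fun u hu => ?_) measurableSet_Ioi
  beta_reduce
  rw [Real.rpow_one, show -x*u = -(x*u) by ring, ← key_eq u]

private theorem logpow_integrable {p : ℝ} (hp : -1 < p) :
    IntegrableOn (fun t => (-Real.log t) ^ p) (Ioo (0:ℝ) 1) := by
  have h := integrableOn_rpow_mul_exp_neg_mul_rpow (p := 1) (s := p) (b := 1) hp one_pos
    one_pos
  rw [subst_exp_integrable]
  refine h.congr_fun (fun u hu => ?_) measurableSet_Ioi
  beta_reduce
  rw [Real.rpow_one, Real.log_exp, neg_neg, neg_one_mul]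
  ring

private theorem refl_deriv : ∀ t ∈ Ioo (0:ℝ) 1,
    HasDerivWithinAt (fun t : ℝ => 1 - t) (-1 : ℝ) (Ioo 0 1) t := fun t _ =>
  by simpa [Pi.sub_def] using ((hasDerivAt_const t (1:ℝ)).sub (hasDerivAt_id t)).hasDerivWithinAt (s := Ioo 0 1)

private theorem refl_image : (fun t : ℝ => 1 - t) '' Ioo 0 1 = Ioo 0 1 := by
  ext y
  simp only [mem_image, mem_Ioo]
  constructor
  · rintro ⟨t, ⟨h1, h2⟩, rfl⟩; constructor <;> linarith
  · rintro ⟨h1, h2⟩; exact ⟨1 - y, ⟨by linarith, by linarith⟩, by ring⟩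

private theorem logpow_integrable' {p : ℝ} (hp : -1 < p) :
    IntegrableOn (fun t => (-Real.log (1 - t)) ^ p) (Ioo (0:ℝ) 1) := by
  have h := logpow_integrable hp
  rw [← refl_image, integrableOn_image_iff_integrableOn_abs_deriv_smul measurableSet_Ioo
    refl_deriv (fun a _ b _ h => by linarith [congrArg id h])] at h
  simpa using h

private theorem biGamma_integrand_integrable {x : ℝ} (hx : 1 ≤ x) :
    IntegrableOn (fun t => (-Real.log t) ^ (x-1) * (-Real.log (1-t)) ^ (x-1))
      (Ioo (0:ℝ) 1) := by
  set p := x - 1 with hp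
  have hp0 : 0 ≤ p := by simp [hp]; linarith
  have hB : IntegrableOn (fun t => (-Real.log t) ^ (2*p) + (-Real.log (1-t)) ^ (2*p))
      (Ioo (0:ℝ) 1) :=
    (logpow_integrable (by linarith)).add (logpow_integrable' (by linarith))
  refine hB.mono' ?_ ?_
  · -- AEStronglyMeasurable
    apply ContinuousOn.aestronglyMeasurable ?_ measurableSet_Ioo
    apply ContinuousOn.mul
    · exact (Real.continuousOn_log.mono (fun t ht => ne_of_gt ht.1)).neg.rpow_const
        (fun t _ => Or.inr hp0)
    · refine ((Real.continuousOn_log.comp (by fun_prop)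
        (fun t (ht : t ∈ Ioo (0:ℝ) 1) => ?_)).neg.rpow_const (fun t _ => Or.inr hp0))
      exact ne_of_gt (by linarith [ht.2] : (0:ℝ) < 1 - t)
  · refine (ae_restrict_iff' measurableSet_Ioo).2 (ae_of_all _ fun t ht => ?_)
    obtain ⟨h0, h1⟩ := ht
    have ha : 0 < -Real.log t := by simpa using Real.log_neg h0 h1
    have hb : 0 < -Real.log (1 - t) := by
      have := Real.log_neg (x := 1 - t) (by linarith) (by linarith); linarith
    set a := -Real.log t
    set b := -Real.log (1 - t)
    rw [Real.norm_eq_abs, abs_of_nonneg (by positivity)]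
    rcases le_total a b with hab | hab
    · calc a ^ p * b ^ p ≤ b ^ p * b ^ p :=
            mul_le_mul_of_nonneg_right (Real.rpow_le_rpow ha.le hab hp0) (by positivity)
        _ = b ^ (2*p) := by rw [← Real.rpow_add hb]; ring_nf
        _ ≤ a ^ (2*p) + b ^ (2*p) := le_add_of_nonneg_left (by positivity)
    · calc a ^ p * b ^ p ≤ a ^ p * a ^ p :=
            mul_le_mul_of_nonneg_left (Real.rpow_le_rpow hb.le hab hp0) (by positivity)
        _ = a ^ (2*p) := by rw [← Real.rpow_add ha]; ring_nf
        _ ≤ a ^ (2*p) + b ^ (2*p) := le_add_of_nonneg_right (by positivity)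


theorem biGamma_diag (x : ℝ) :
    (1 ≤ x → Real.Gamma x / x ^ x ≤ biGamma x x) ∧
    (0 < x → x ≤ 1 → biGamma x x ≤ Real.Gamma x / x ^ x) := by
  have hbi : biGamma x x =
      ∫ t in Ioo (0:ℝ) 1, (-Real.log t) ^ (x-1) * (-Real.log (1-t)) ^ (x-1) := by
    rw [biGamma, intervalIntegral.integral_of_le zero_le_one,
      MeasureTheory.integral_Ioc_eq_integral_Ioo]
  have key : ∀ t ∈ Ioo (0:ℝ) 1, 0 < -Real.log t ∧ 0 < t ∧ t ≤ -Real.log (1-t) := by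
    intro t ⟨h0, h1⟩
    refine ⟨by simpa using Real.log_neg h0 h1, h0, ?_⟩
    have := Real.log_le_sub_one_of_pos (x := 1 - t) (by linarith)
    linarith
  constructor
  · intro hx1
    have hx0 : (0:ℝ) < x := lt_of_lt_of_le one_pos hx1
    rw [hbi, ← comp_integral hx0]
    refine MeasureTheory.integral_mono_of_nonneg ?_ (biGamma_integrand_integrable hx1) ?_
    · refine (MeasureTheory.ae_restrict_iff' measurableSet_Ioo).2 (ae_of_all _ fun t ht => ?_)
      obtain ⟨ha, hb, -⟩ := key t ht
      exact mul_nonneg (Real.rpow_nonneg ha.le _) (Real.rpow_nonneg hb.le _)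
    · refine (MeasureTheory.ae_restrict_iff' measurableSet_Ioo).2 (ae_of_all _ fun t ht => ?_)
      obtain ⟨ha, hb, hc⟩ := key t ht
      exact mul_le_mul_of_nonneg_left (Real.rpow_le_rpow hb.le hc (by linarith))
        (Real.rpow_nonneg ha.le _)
  · intro hx0 hx1
    rw [hbi, ← comp_integral hx0]
    refine MeasureTheory.integral_mono_of_nonneg ?_ (comp_integrable hx0) ?_
    · refine (MeasureTheory.ae_restrict_iff' measurableSet_Ioo).2 (ae_of_all _ fun t ht => ?_)
      obtain ⟨ha, hb, hc⟩ := key t ht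
      have hb' : 0 < -Real.log (1-t) := lt_of_lt_of_le hb hc
      exact mul_nonneg (Real.rpow_nonneg ha.le _) (Real.rpow_nonneg hb'.le _)
    · refine (MeasureTheory.ae_restrict_iff' measurableSet_Ioo).2 (ae_of_all _ fun t ht => ?_)
      obtain ⟨ha, hb, hc⟩ := key t ht
      exact mul_le_mul_of_nonneg_left (Real.rpow_le_rpow_of_nonpos hb hc (by linarith))
        (Real.rpow_nonneg ha.le _)
end
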